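/- For w(x) = x_n(|x'|² + β x_n^{2+2α})^{-γ} with β = (1+α)^{-2}, γ = (n−1)/2 + 1/(2(1+α)), and ρ ∈ (0,1), the function w^{1+ρ} is a strict subsolution of the Baouendi–Grushin operator in the upper half space: 𝔏(w^{1+ρ}) = ρ(1+ρ)w^{ρ−1}[x_n^{2α}Σ_{i<n}(D_i w)² + (D_n w)²] ≥ ρ(1+ρ)w^{ρ-1}(|x'|² + β x_n^{2+2α})^{-2γ} > 0 in {x_n > 0}. -/

import Mathlib

open scoped BigOperators

noncomputable def pderiv1 {m : ℕ} (u : EuclideanSpace ℝ (Fin m) × ℝ → ℝ)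
    (v x : EuclideanSpace ℝ (Fin m) × ℝ) : ℝ :=
  deriv (fun t : ℝ => u (x + t • v)) 0

noncomputable def pderiv2 {m : ℕ} (u : EuclideanSpace ℝ (Fin m) × ℝ → ℝ)
    (v w x : EuclideanSpace ℝ (Fin m) × ℝ) : ℝ :=
  pderiv1 (pderiv1 u v) w x


noncomputable def bvec (m : ℕ) (i : Fin m) : EuclideanSpace ℝ (Fin m) × ℝ :=
  (EuclideanSpace.single i 1, 0)

noncomputable def nvec (m : ℕ) : EuclideanSpace ℝ (Fin m) × ℝ := (0, 1)

lemma pderiv1_line {m : ℕ} (u : EuclideanSpace ℝ (Fin m) × ℝ → ℝ)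
    (v x : EuclideanSpace ℝ (Fin m) × ℝ) (f : ℝ → ℝ)
    (hf : ∀ t, u (x + t • v) = f t) : pderiv1 u v x = deriv f 0 := by
  unfold pderiv1
  congr 1
  funext t
  exact hf t

lemma pderiv2_line {m : ℕ} (u : EuclideanSpace ℝ (Fin m) × ℝ → ℝ)
    (v x : EuclideanSpace ℝ (Fin m) × ℝ) (f : ℝ → ℝ)
    (hf : ∀ t, u (x + t • v) = f t) : pderiv2 u v v x = deriv (deriv f) 0 := by
  unfold pderiv2 pderiv1
  have h : (fun t : ℝ => deriv (fun s : ℝ => u (x + t • v + s • v)) 0) = deriv f := by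
    funext t
    have h2 : (fun s : ℝ => u (x + t • v + s • v)) = fun s => f (t + s) := by
      funext s
      rw [← hf (t + s), add_smul, add_assoc]
    rw [h2, deriv_comp_const_add]
    norm_num
  exact congrArg (fun g => deriv g 0) h

lemma tang_derivs (C c0 a e : ℝ) (h : ∀ t : ℝ, 0 < c0 + 2*a*t + t^2) :
    deriv (fun t : ℝ => C * (c0 + 2*a*t + t^2) ^ (-e)) 0 = C * (-e) * c0 ^ (-e-1) * (2*a)
    ∧ deriv (deriv (fun t : ℝ => C * (c0 + 2*a*t + t^2) ^ (-e))) 0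
      = C * (e*(e+1) * c0 ^ (-e-2) * (2*a)^2 - 2*e * c0 ^ (-e-1)) := by
  have hc0 : c0 + 2*a*0 + 0^2 = c0 := by ring
  have hS : ∀ t : ℝ, HasDerivAt (fun t : ℝ => c0 + 2*a*t + t^2) (2*a + 2*t) t := by
    intro t
    have h2 := (((hasDerivAt_id t).const_mul (2*a)).add (hasDerivAt_pow 2 t)).const_add c0
    convert h2 using 1
    · rfl
    · rfl
    · funext y; simp [id]; ring
    · norm_num
  have h1 : ∀ t : ℝ, HasDerivAt (fun t : ℝ => C * (c0 + 2*a*t + t^2) ^ (-e))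
      (C * ((2*a + 2*t) * (-e) * (c0 + 2*a*t + t^2) ^ (-e-1))) t := by
    intro t
    exact ((hS t).rpow_const (Or.inl (h t).ne')).const_mul C
  have hd1 : deriv (fun t : ℝ => C * (c0 + 2*a*t + t^2) ^ (-e))
      = fun t : ℝ => C * ((2*a + 2*t) * (-e) * (c0 + 2*a*t + t^2) ^ (-e-1)) :=
    funext fun t => (h1 t).deriv
  constructor
  · rw [hd1]
    simp only [hc0, mul_zero, add_zero]
    ring
  · rw [hd1]
    have hr : HasDerivAt (fun t : ℝ => (c0 + 2*a*t + t^2) ^ (-e-1))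
        ((2*a + 2*0) * (-e-1) * (c0 + 2*a*0 + 0^2) ^ (-e-2)) 0 := by
      have := (hS 0).rpow_const (p := -e-1) (Or.inl (h 0).ne')
      rw [show (-e-1-1 : ℝ) = -e-2 by ring] at this
      exact this
    have hlin : HasDerivAt (fun t : ℝ => (2*a + 2*t) * (-e)) (2 * (-e)) 0 := by
      have h2 := (((hasDerivAt_id (0:ℝ)).const_mul 2).const_add (2*a)).mul_const (-e)
      simpa using h2
    have h2 := (hlin.mul hr).const_mul C
    rw [HasDerivAt.deriv (f := fun t : ℝ => C * ((2*a + 2*t) * (-e) * (c0 + 2*a*t + t^2) ^ (-e-1))) h2, hc0]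
    ring

lemma normal_deriv2 (X P b q p e : ℝ) (hX : 0 < X) (hP : 0 ≤ P) (hb : 0 < b)
    (F : ℝ → ℝ) (hF : ∀ t : ℝ, -X < t → F t = (X+t)^p * (P + b*(X+t)^q)^(-e)) :
    deriv (deriv F) 0 =
      p*(p-1)*X^(p-2)*(P+b*X^q)^(-e)
      - 2*e*p*b*q*X^(q-1)*X^(p-1)*(P+b*X^q)^(-e-1)
      - e*b*q*(q-1)*X^p*X^(q-2)*(P+b*X^q)^(-e-1)
      + e*(e+1)*(b*q*X^(q-1))^2*X^p*(P+b*X^q)^(-e-2) := by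
  have hXt : ∀ t : ℝ, -X < t → 0 < X + t := fun t ht => by linarith
  have hid : ∀ t : ℝ, HasDerivAt (fun t : ℝ => X + t) 1 t := fun t =>
    (hasDerivAt_id t).const_add X
  have hσpos : ∀ t : ℝ, -X < t → 0 < P + b*(X+t)^q := fun t ht => by
    have := Real.rpow_pos_of_pos (hXt t ht) q
    nlinarith
  have hσ : ∀ t : ℝ, -X < t → HasDerivAt (fun t : ℝ => P + b*(X+t)^q)
      (b*(1*q*(X+t)^(q-1))) t := fun t ht =>
    (((hid t).rpow_const (Or.inl (hXt t ht).ne')).const_mul b).const_add P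
  have hσe : ∀ t : ℝ, -X < t → HasDerivAt (fun t : ℝ => (P + b*(X+t)^q)^(-e))
      ((b*(1*q*(X+t)^(q-1))) * (-e) * (P + b*(X+t)^q)^(-e-1)) t := fun t ht =>
    (hσ t ht).rpow_const (Or.inl (hσpos t ht).ne')
  set g1 : ℝ → ℝ := fun t =>
    1*p*(X+t)^(p-1) * (P + b*(X+t)^q)^(-e)
    + (X+t)^p * ((b*(1*q*(X+t)^(q-1))) * (-e) * (P + b*(X+t)^q)^(-e-1)) with hg1def
  have hg : ∀ t : ℝ, -X < t →
      HasDerivAt (fun t : ℝ => (X+t)^p * (P + b*(X+t)^q)^(-e)) (g1 t) t := fun t ht =>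
    (((hid t).rpow_const (Or.inl (hXt t ht).ne')).mul (hσe t ht))
  have hF' : ∀ t : ℝ, -X < t → HasDerivAt F (g1 t) t := by
    intro t ht
    refine (hg t ht).congr_of_eventuallyEq ?_
    exact Filter.eventuallyEq_of_mem (isOpen_Ioi.mem_nhds ht) (fun s hs => hF s hs)
  have hdF : deriv F =ᶠ[nhds 0] g1 :=
    Filter.eventuallyEq_of_mem (isOpen_Ioi.mem_nhds (show (-X) < 0 by linarith))
      (fun t ht => (hF' t ht).deriv)
  rw [hdF.deriv_eq]
  -- now compute deriv g1 0
  have h0 : (-X) < 0 := by linarith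
  have hXne : X + 0 ≠ 0 := by rw [add_zero]; exact hX.ne'
  have ht1 : HasDerivAt (fun t : ℝ => 1*p*(X+t)^(p-1))
      (1*p*(1*(p-1)*(X+0)^(p-2))) 0 := by
    have := ((hid 0).rpow_const (p := p-1) (Or.inl hXne)).const_mul (1*p)
    rw [show (p-1-1 : ℝ) = p-2 by ring] at this
    exact this
  have ht2 : HasDerivAt (fun t : ℝ => (b*(1*q*(X+t)^(q-1))) * (-e))
      ((b*(1*q*(1*(q-1)*(X+0)^(q-2)))) * (-e)) 0 := by
    have := (((((hid 0).rpow_const (p := q-1) (Or.inl hXne))).const_mul (1*q)).const_mul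
      b).mul_const (-e)
    rw [show (q-1-1 : ℝ) = q-2 by ring] at this
    exact this
  have ht3 : HasDerivAt (fun t : ℝ => (P + b*(X+t)^q)^(-e-1))
      ((b*(1*q*(X+0)^(q-1))) * (-e-1) * (P + b*(X+0)^q)^(-e-2)) 0 := by
    have := (hσ 0 h0).rpow_const (p := -e-1) (Or.inl (hσpos 0 h0).ne')
    rw [show (-e-1-1 : ℝ) = -e-2 by ring] at this
    exact this
  have hG := (ht1.mul (hσe 0 h0)).add
    (((hid 0).rpow_const (p := p) (Or.inl hXne)).mul (ht2.mul ht3))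
  rw [hg1def, HasDerivAt.deriv (f := fun t : ℝ => 1*p*(X+t)^(p-1) * (P + b*(X+t)^q)^(-e)
    + (X+t)^p * ((b*(1*q*(X+t)^(q-1))) * (-e) * (P + b*(X+t)^q)^(-e-1))) hG]
  simp only [add_zero, Pi.mul_apply]
  ring

lemma normal_deriv1 (X P b q e : ℝ) (hX : 0 < X) (hP : 0 ≤ P) (hb : 0 < b) :
    deriv (fun t : ℝ => (X+t) * (P + b*(X+t)^q)^(-e)) 0
      = (P + b*X^q)^(-e) + X * ((b*q*X^(q-1)) * (-e) * (P + b*X^q)^(-e-1)) := by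
  have hXne : X + 0 ≠ 0 := by rw [add_zero]; exact hX.ne'
  have h1 : HasDerivAt (fun t : ℝ => X + t) 1 0 := (hasDerivAt_id 0).const_add X
  have hσpos : 0 < P + b*(X+0)^q := by
    have := Real.rpow_pos_of_pos (by rw [add_zero]; exact hX : (0:ℝ) < X + 0) q
    nlinarith
  have hσ : HasDerivAt (fun t : ℝ => P + b*(X+t)^q) (b*(1*q*(X+0)^(q-1))) 0 :=
    ((h1.rpow_const (Or.inl hXne)).const_mul b).const_add P
  have h2 := h1.mul (hσ.rpow_const (p := -e) (Or.inl hσpos.ne'))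
  rw [HasDerivAt.deriv (f := fun t : ℝ => (X+t) * (P + b*(X+t)^q)^(-e)) h2]
  simp only [add_zero]
  ring

set_option maxHeartbeats 4000000

/-- For `w(x) = xₙ(|x'|² + βxₙ^{2+2α})^{-γ}` and `ρ ∈ (0,1)`, the function `w^{1+ρ}` is a
strict subsolution of the Baouendi–Grushin operator in the upper half space:
`𝔏(w^{1+ρ}) = ρ(1+ρ)w^{ρ−1}[xₙ^{2α}Σ(Dᵢw)² + (Dₙw)²] ≥ ρ(1+ρ)w^{ρ−1}(|x'|²+βxₙ^{2+2α})^{-2γ} > 0`. -/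
theorem stmt10 (m : ℕ) (hm : 1 ≤ m) (α ρ : ℝ) (hα : 0 < α) (hρ0 : 0 < ρ) (hρ1 : ρ < 1)
    (β γ : ℝ) (hβ : β = ((1 + α) ^ 2)⁻¹) (hγ : γ = (m : ℝ) / 2 + 1 / (2 * (1 + α)))
    (w : EuclideanSpace ℝ (Fin m) × ℝ → ℝ)
    (hw : ∀ x : EuclideanSpace ℝ (Fin m) × ℝ,
      w x = x.2 * (‖x.1‖ ^ 2 + β * x.2 ^ (2 + 2 * α)) ^ (-γ)) :
    ∀ x : EuclideanSpace ℝ (Fin m) × ℝ, 0 < x.2 →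
      (x.2 ^ (2 * α) * ∑ i : Fin m,
            pderiv2 (fun y => w y ^ (1 + ρ)) (bvec m i) (bvec m i) x
          + pderiv2 (fun y => w y ^ (1 + ρ)) (nvec m) (nvec m) x
        = ρ * (1 + ρ) * w x ^ (ρ - 1) *
            (x.2 ^ (2 * α) * ∑ i : Fin m, pderiv1 w (bvec m i) x ^ 2
              + pderiv1 w (nvec m) x ^ 2)) ∧
      ρ * (1 + ρ) * w x ^ (ρ - 1) * (‖x.1‖ ^ 2 + β * x.2 ^ (2 + 2 * α)) ^ (-(2 * γ))
        ≤ ρ * (1 + ρ) * w x ^ (ρ - 1) *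
            (x.2 ^ (2 * α) * ∑ i : Fin m, pderiv1 w (bvec m i) x ^ 2
              + pderiv1 w (nvec m) x ^ 2) ∧
      0 < ρ * (1 + ρ) * w x ^ (ρ - 1) *
            (‖x.1‖ ^ 2 + β * x.2 ^ (2 + 2 * α)) ^ (-(2 * γ)) := by
  intro x hx
  have hβpos : 0 < β := by rw [hβ]; positivity
  have hP : (0:ℝ) ≤ ‖x.1‖^2 := by positivity
  have hQ : 0 < x.2 ^ (2+2*α) := Real.rpow_pos_of_pos hx _
  have hs : 0 < ‖x.1‖^2 + β * x.2^(2+2*α) := by nlinarith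
  set P : ℝ := ‖x.1‖^2 with hPdef
  set X : ℝ := x.2 with hXdef
  set s0 : ℝ := P + β * X^(2+2*α) with hs0def
  -- sum of squares
  have hsum_sq : P = ∑ i, (x.1 i)^2 := by
    rw [hPdef, EuclideanSpace.norm_eq, Real.sq_sqrt (by positivity)]
    simp [sq_abs]
  have hasq : ∀ i, (x.1 i)^2 ≤ P := by
    intro i
    rw [hsum_sq]
    exact Finset.single_le_sum (fun j _ => sq_nonneg (x.1 j)) (Finset.mem_univ i)
  have hSipos : ∀ (i : Fin m) (t : ℝ), 0 < s0 + 2*(x.1 i)*t + t^2 := by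
    intro i t
    have h1 := hasq i
    have h2 := sq_nonneg (t + x.1 i)
    have h3 : 0 < β * X^(2+2*α) := mul_pos hβpos hQ
    rw [hs0def]
    nlinarith
  -- line decompositions
  have hcomp : ∀ (i : Fin m) (t : ℝ),
      x + t • bvec m i = (x.1 + t • EuclideanSpace.single i (1:ℝ), x.2) := by
    intro i t
    simp [bvec, Prod.ext_iff]
  have hnorm : ∀ (i : Fin m) (t : ℝ),
      ‖x.1 + t • EuclideanSpace.single i (1:ℝ)‖^2 = P + 2*(x.1 i)*t + t^2 := by
    intro i t
    rw [norm_add_sq_real, real_inner_smul_right, EuclideanSpace.inner_single_right, norm_smul]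
    simp [Real.norm_eq_abs, sq_abs]
    ring
  have hwline : ∀ (i : Fin m) (t : ℝ),
      w (x + t • bvec m i) = X * (s0 + 2*(x.1 i)*t + t^2)^(-γ) := by
    intro i t
    rw [hcomp i t, hw]
    simp only
    rw [hnorm i t]
    congr 2
    rw [hs0def]
    ring
  have hWline : ∀ (i : Fin m) (t : ℝ),
      (fun y => w y ^ (1+ρ)) (x + t • bvec m i)
        = X^(1+ρ) * (s0 + 2*(x.1 i)*t + t^2)^(-(γ*(1+ρ))) := by
    intro i t
    simp only
    rw [hwline i t,
      Real.mul_rpow hx.le (Real.rpow_nonneg (hSipos i t).le _),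
      ← Real.rpow_mul (hSipos i t).le, neg_mul]
  have hT2 : ∀ i : Fin m, pderiv2 (fun y => w y ^ (1+ρ)) (bvec m i) (bvec m i) x
      = X^(1+ρ) * ((γ*(1+ρ))*((γ*(1+ρ))+1) * s0 ^ (-(γ*(1+ρ))-2) * (2*(x.1 i))^2
        - 2*(γ*(1+ρ)) * s0 ^ (-(γ*(1+ρ))-1)) := by
    intro i
    rw [pderiv2_line (fun y => w y ^ (1+ρ)) (bvec m i) x
      (fun t => X^(1+ρ) * (s0 + 2*(x.1 i)*t + t^2)^(-(γ*(1+ρ)))) (hWline i)]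
    exact (tang_derivs (X^(1+ρ)) s0 (x.1 i) (γ*(1+ρ)) (hSipos i)).2
  have hT1 : ∀ i : Fin m, pderiv1 w (bvec m i) x
      = X * (-γ) * s0 ^ (-γ-1) * (2*(x.1 i)) := by
    intro i
    rw [pderiv1_line w (bvec m i) x
      (fun t => X * (s0 + 2*(x.1 i)*t + t^2)^(-γ)) (hwline i)]
    exact (tang_derivs X s0 (x.1 i) γ (hSipos i)).1
  -- normal direction
  have hncomp : ∀ t : ℝ, x + t • nvec m = (x.1, x.2 + t) := by
    intro t
    simp [nvec, Prod.ext_iff]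
  have hwnline : ∀ t : ℝ, w (x + t • nvec m)
      = (X + t) * (P + β*(X+t)^(2+2*α))^(-γ) := by
    intro t
    rw [hncomp t, hw]
  have hN1 : pderiv1 w (nvec m) x
      = s0^(-γ) + X * ((β*(2+2*α)*X^((2+2*α)-1)) * (-γ) * s0^(-γ-1)) := by
    rw [pderiv1_line w (nvec m) x
      (fun t => (X + t) * (P + β*(X+t)^(2+2*α))^(-γ)) hwnline, hs0def]
    exact normal_deriv1 X P β (2+2*α) γ hx hP hβpos
  have hWnline : ∀ t : ℝ, -X < t → (fun t : ℝ => (fun y => w y ^ (1+ρ)) (x + t • nvec m)) t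
      = (X+t)^(1+ρ) * (P + β*(X+t)^(2+2*α))^(-(γ*(1+ρ))) := by
    intro t ht
    have hXt : (0:ℝ) < X + t := by linarith
    have hσ : (0:ℝ) < P + β*(X+t)^(2+2*α) := by
      have := Real.rpow_pos_of_pos hXt (2+2*α)
      nlinarith
    simp only
    rw [hwnline t, Real.mul_rpow hXt.le (Real.rpow_nonneg hσ.le _),
      ← Real.rpow_mul hσ.le, neg_mul]
  have hN2 : pderiv2 (fun y => w y ^ (1+ρ)) (nvec m) (nvec m) x
      = (1+ρ)*((1+ρ)-1)*X^((1+ρ)-2)*s0^(-(γ*(1+ρ)))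
      - 2*(γ*(1+ρ))*(1+ρ)*β*(2+2*α)*X^((2+2*α)-1)*X^((1+ρ)-1)*s0^(-(γ*(1+ρ))-1)
      - (γ*(1+ρ))*β*(2+2*α)*((2+2*α)-1)*X^(1+ρ)*X^((2+2*α)-2)*s0^(-(γ*(1+ρ))-1)
      + (γ*(1+ρ))*((γ*(1+ρ))+1)*(β*(2+2*α)*X^((2+2*α)-1))^2*X^(1+ρ)*s0^(-(γ*(1+ρ))-2) := by
    rw [pderiv2_line (fun y => w y ^ (1+ρ)) (nvec m) x
      (fun t => (fun y => w y ^ (1+ρ)) (x + t • nvec m)) (fun t => rfl), hs0def]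
    exact normal_deriv2 X P β (2+2*α) (1+ρ) (γ*(1+ρ)) hx hP hβpos _ hWnline
  -- atoms
  set R : ℝ := X^ρ with hR
  set A2 : ℝ := X^(2*α) with hA2
  set K : ℝ := s0^γ with hK
  set L : ℝ := s0^(γ*ρ) with hL
  have hRpos : 0 < R := Real.rpow_pos_of_pos hx _
  have hA2pos : 0 < A2 := Real.rpow_pos_of_pos hx _
  have hKpos : 0 < K := Real.rpow_pos_of_pos hs _
  have hLpos : 0 < L := Real.rpow_pos_of_pos hs _
  have c1 : X^(1+ρ) = X*R := by rw [Real.rpow_add hx, Real.rpow_one]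
  have c2 : X^((1+ρ)-1) = R := by rw [show ((1+ρ)-1 : ℝ) = ρ by ring]
  have c3 : X^((1+ρ)-2) = R/X := by
    rw [show ((1+ρ)-2 : ℝ) = ρ-1 by ring, Real.rpow_sub hx, Real.rpow_one]
  have hX2 : X^((2:ℝ)) = X^(2:ℕ) := by
    rw [← Real.rpow_natCast X 2]; norm_num
  have c4 : X^(2+2*α) = X^2*A2 := by rw [Real.rpow_add hx, hX2]
  have c5 : X^((2+2*α)-1) = X*A2 := by
    rw [show ((2+2*α)-1 : ℝ) = 1+2*α by ring, Real.rpow_add hx, Real.rpow_one]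
  have c6 : X^((2+2*α)-2) = A2 := by rw [show ((2+2*α)-2 : ℝ) = 2*α by ring]
  have d1 : s0^(-γ) = K⁻¹ := by rw [Real.rpow_neg hs.le]
  have d2 : s0^(-γ-1) = K⁻¹*s0⁻¹ := by
    rw [show (-γ-1 : ℝ) = -γ + -1 by ring, Real.rpow_add hs, Real.rpow_neg_one, d1]
  have d3 : s0^(-(γ*(1+ρ))) = K⁻¹*L⁻¹ := by
    rw [show (-(γ*(1+ρ)) : ℝ) = -γ + -(γ*ρ) by ring, Real.rpow_add hs,
      Real.rpow_neg hs.le, Real.rpow_neg hs.le]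
  have d4 : s0^(-(γ*(1+ρ))-1) = K⁻¹*L⁻¹*s0⁻¹ := by
    rw [show (-(γ*(1+ρ))-1 : ℝ) = (-γ + -(γ*ρ)) + -1 by ring, Real.rpow_add hs,
      Real.rpow_neg_one, Real.rpow_add hs, Real.rpow_neg hs.le, Real.rpow_neg hs.le]
  have d5 : s0^(-(γ*(1+ρ))-2) = K⁻¹*L⁻¹*s0⁻¹*s0⁻¹ := by
    rw [show (-(γ*(1+ρ))-2 : ℝ) = ((-γ + -(γ*ρ)) + -1) + -1 by ring, Real.rpow_add hs,
      Real.rpow_neg_one, Real.rpow_add hs, Real.rpow_neg_one, Real.rpow_add hs,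
      Real.rpow_neg hs.le, Real.rpow_neg hs.le]
  have d6 : s0^(-(2*γ)) = K⁻¹*K⁻¹ := by
    rw [show (-(2*γ) : ℝ) = -γ + -γ by ring, Real.rpow_add hs, Real.rpow_neg hs.le]
  have hwx : w x = X * s0^(-γ) := hw x
  have hwxpos : 0 < w x := by
    rw [hwx]; exact mul_pos hx (Real.rpow_pos_of_pos hs _)
  have d7 : w x ^ (ρ-1) = (R/X)*(K*L⁻¹) := by
    rw [hwx, Real.mul_rpow hx.le (Real.rpow_nonneg hs.le _),
      ← Real.rpow_mul hs.le, show ((-γ)*(ρ-1) : ℝ) = γ + -(γ*ρ) by ring,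
      Real.rpow_add hs, Real.rpow_neg hs.le, Real.rpow_sub hx, Real.rpow_one]
  -- sums
  have hT2' : ∀ i : Fin m, pderiv2 (fun y => w y ^ (1+ρ)) (bvec m i) (bvec m i) x
      = (4*(X*R)*((γ*(1+ρ))*((γ*(1+ρ))+1))*(K⁻¹*L⁻¹*s0⁻¹*s0⁻¹)) * (x.1 i)^2
        + (-(2*(γ*(1+ρ))*(X*R)*(K⁻¹*L⁻¹*s0⁻¹))) := by
    intro i
    rw [hT2 i, c1, d4, d5]; ring
  have hsum2 : ∑ i : Fin m, pderiv2 (fun y => w y ^ (1+ρ)) (bvec m i) (bvec m i) x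
      = (4*(X*R)*((γ*(1+ρ))*((γ*(1+ρ))+1))*(K⁻¹*L⁻¹*s0⁻¹*s0⁻¹)) * P
        + (m:ℝ) * (-(2*(γ*(1+ρ))*(X*R)*(K⁻¹*L⁻¹*s0⁻¹))) := by
    rw [Finset.sum_congr rfl (fun i _ => hT2' i), Finset.sum_add_distrib,
      ← Finset.mul_sum, ← hsum_sq, Finset.sum_const, Finset.card_univ,
      Fintype.card_fin, nsmul_eq_mul]
  have hT1' : ∀ i : Fin m, pderiv1 w (bvec m i) x ^ 2
      = (4*γ^2*X^2*(K⁻¹*s0⁻¹)^2) * (x.1 i)^2 := by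
    intro i
    rw [hT1 i, d2]; ring
  have hsum1 : ∑ i : Fin m, pderiv1 w (bvec m i) x ^ 2
      = (4*γ^2*X^2*(K⁻¹*s0⁻¹)^2) * P := by
    rw [Finset.sum_congr rfl (fun i _ => hT1' i), ← Finset.mul_sum, ← hsum_sq]
  have hsplit : β*(X^2*A2) = s0 - P := by rw [hs0def, c4]; ring
  have rel2 : 2*γ = (m:ℝ) + β*(1+α) := by
    rw [hγ, hβ]; field_simp
  have rel3 : β*(1+α)^2 = 1 := by
    rw [hβ]; field_simp
  clear_value K L R A2 s0 X P
  have hss : s0 * s0⁻¹ = 1 := mul_inv_cancel₀ hs.ne'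
  have hKK : K * K⁻¹ = 1 := mul_inv_cancel₀ hKpos.ne'
  have hXX : X * X⁻¹ = 1 := mul_inv_cancel₀ hx.ne'
  have hLw : A2*(4*X*(γ*(γ+1))*(K⁻¹*(s0⁻¹*s0⁻¹))*P - 2*(m:ℝ)*γ*X*(K⁻¹*s0⁻¹))
      - 2*γ*β*(2+2*α)*(X*A2)*(K⁻¹*s0⁻¹) - γ*β*(2+2*α)*(1+2*α)*(X*A2)*(K⁻¹*s0⁻¹)
      + γ*(γ+1)*(β*(2+2*α)*(X*A2))^2*X*(K⁻¹*(s0⁻¹*s0⁻¹)) = 0 := by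
    linear_combination (γ*X*A2*K⁻¹*s0⁻¹*s0⁻¹) *
      (((γ+1)*β*(2+2*α)^2) * hsplit + (2*s0) * rel2 + (4*γ*s0 - 4*(γ+1)*P) * rel3)
      + (γ*X*A2*K⁻¹*s0⁻¹*(2*(m:ℝ) + β*(2+2*α)*(3+2*α))) * hss
  have hγpos : 0 < γ := by
    rw [hγ]; positivity
  have hγ1 : 0 ≤ γ*(1+α) - 1 := by
    have hm1 : (1:ℝ) ≤ (m:ℝ) := by exact_mod_cast hm
    have h2 : γ*(1+α) - 1 = ((m:ℝ)*(1+α) - 1)/2 := by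
      rw [hγ]; field_simp; ring
    rw [h2]
    have hm1 : (1:ℝ) ≤ (m:ℝ) := by exact_mod_cast hm
    have h3 : (1:ℝ)*(1:ℝ) ≤ (m:ℝ)*(1+α) :=
      mul_le_mul hm1 (by linarith only [hα]) one_pos.le (by linarith only [hm1])
    linarith only [h3]
  have h1α2 : (0:ℝ) < (1+α)^2 := by positivity
  have hq1 : 0 ≤ 4*γ^2 - 2*(γ*β*(2+2*α)) := by
    have e1 : (4*γ^2 - 2*(γ*β*(2+2*α)))*(1+α)^2 = 4*γ*(γ*(1+α)-1)*(1+α) := by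
      linear_combination (-4*γ*(1+α)) * rel3
    have h2 : 0 ≤ (4*γ^2 - 2*(γ*β*(2+2*α)))*(1+α)^2 := by
      rw [e1]
      exact mul_nonneg (mul_nonneg (by positivity) hγ1) (by positivity)
    exact (mul_nonneg_iff_of_pos_right h1α2).mp h2
  have hq2 : 0 ≤ (γ*β*(2+2*α))^2 - 2*(γ*β*(2+2*α))*β := by
    have e2 : (γ*β*(2+2*α) - 2*β)*(1+α)^2 = 2*(γ*(1+α)-1) := by
      linear_combination (2*γ*(1+α) - 2) * rel3
    have h2 : 0 ≤ (γ*β*(2+2*α) - 2*β)*(1+α)^2 := by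
      rw [e2]; linarith only [hγ1]
    have h3 : 0 ≤ γ*β*(2+2*α) - 2*β := (mul_nonneg_iff_of_pos_right h1α2).mp h2
    have h4 : (γ*β*(2+2*α))^2 - 2*(γ*β*(2+2*α))*β = (γ*β*(2+2*α))*(γ*β*(2+2*α) - 2*β) := by
      ring
    rw [h4]
    exact mul_nonneg (by positivity) h3
  have hkey : s0^2 ≤ 4*γ^2*(X^2*A2)*P + (s0 - γ*β*(2+2*α)*(X^2*A2))^2 := by
    have hQQ : (0:ℝ) ≤ X^2*A2 := by positivity
    have hEq : 4*γ^2*(X^2*A2)*P + (s0 - γ*β*(2+2*α)*(X^2*A2))^2 - s0^2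
        = (4*γ^2 - 2*(γ*β*(2+2*α)))*((X^2*A2)*P)
          + ((γ*β*(2+2*α))^2 - 2*(γ*β*(2+2*α))*β)*(X^2*A2)^2 := by
      linear_combination (2*(γ*β*(2+2*α))*(X^2*A2)) * hsplit
    have t1 : 0 ≤ (4*γ^2 - 2*(γ*β*(2+2*α)))*((X^2*A2)*P) :=
      mul_nonneg hq1 (mul_nonneg hQQ hP)
    have t2 : 0 ≤ ((γ*β*(2+2*α))^2 - 2*(γ*β*(2+2*α))*β)*(X^2*A2)^2 :=
      mul_nonneg hq2 (sq_nonneg _)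
    linarith only [hEq, t1, t2]
  refine ⟨?_, ?_, ?_⟩
  · rw [hsum2, hN2, hsum1, hN1, d7, c1, c2, c3, c5, c6, d1, d2, d3, d4, d5]
    linear_combination ((1+ρ)*R*L⁻¹) * hLw
      + (-(ρ*(1+ρ))*R*K⁻¹*L⁻¹*X⁻¹*(4*A2*P*X^2*γ^2*s0⁻¹^2 - 4*A2*X^2*β*γ*(1+α)*s0⁻¹
          + 4*A2^2*X^4*β^2*γ^2*(1+α)^2*s0⁻¹^2 + 1)) * hKK
      + (-(ρ*(1+ρ))*R*K⁻¹*L⁻¹*X*(4*A2*P*γ^2*s0⁻¹^2 - 4*A2*β*γ*(1+α)*s0⁻¹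
          + 4*A2^2*X^2*β^2*γ^2*(1+α)^2*s0⁻¹^2)) * hXX
  · rw [hsum1, hN1, d6, d1, d2, c5]
    refine mul_le_mul_of_nonneg_left ?_ ?_
    · calc K⁻¹*K⁻¹ = (K⁻¹*s0⁻¹)^2 * s0^2 := by
            field_simp
        _ ≤ (K⁻¹*s0⁻¹)^2 *
              (4*γ^2*(X^2*A2)*P + (s0 - γ*β*(2+2*α)*(X^2*A2))^2) :=
            mul_le_mul_of_nonneg_left hkey (sq_nonneg _)
        _ = A2 * (4*γ^2*X^2*(K⁻¹*s0⁻¹)^2*P)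
              + (K⁻¹ + X*(β*(2+2*α)*(X*A2)*(-γ)*(K⁻¹*s0⁻¹)))^2 := by
            field_simp
            ring
    · exact mul_nonneg (mul_nonneg hρ0.le (by linarith : (0:ℝ) ≤ 1+ρ))
        (Real.rpow_pos_of_pos hwxpos _).le
  · exact mul_pos (mul_pos (mul_pos hρ0 (by linarith)) (Real.rpow_pos_of_pos hwxpos _))
      (Real.rpow_pos_of_pos hs _)
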